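/- arXiv:2510.20802 — 2 statements merged into one kernel-verified Lean document; each statement's English description precedes it below -/
import Mathlib

section
/- Every long-refinement graph G on at least 2 vertices has exactly two distinct vertex degrees, i.e., |{deg(v) : v ∈ V(G)}| = 2. -/
variable {V : Type*}

/-- Colour Refinement equivalence: `crRel G i u v` means `u` and `v` get the same colour
after `i` iterations of Colour Refinement on `G` (starting monochromatic). -/
def crRel (G : SimpleGraph V) : ℕ → V → V → Prop
  | 0 => fun _ _ => True
  | (i+1) => fun u v => crRel G i u v ∧ ∀ w : V,
      Nat.card {x : V // G.Adj u x ∧ crRel G i x w} =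
      Nat.card {x : V // G.Adj v x ∧ crRel G i x w}

/-- The colour class of `v` after `i` iterations. -/
def crClass (G : SimpleGraph V) (i : ℕ) (v : V) : Set V :=
  {u : V | crRel G i u v}

/-- The partition `π^i` induced by the colouring after `i` iterations. -/
def crPartition (G : SimpleGraph V) (i : ℕ) : Set (Set V) :=
  {C : Set V | ∃ v : V, C = crClass G i v}

/-- `G` is a long-refinement graph: Colour Refinement takes exactly `n - 1` iterations
to stabilise. -/
def IsLongRefinement [Fintype V] (G : SimpleGraph V) : Prop :=
  (∀ i < Fintype.card V - 1, crPartition G (i+1) ≠ crPartition G i) ∧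
  crPartition G (Fintype.card V) = crPartition G (Fintype.card V - 1)

/-- The degree of a vertex. -/
noncomputable def vdeg (G : SimpleGraph V) (v : V) : ℕ :=
  Nat.card {u : V // G.Adj v u}

/-- `degOn G C C' k` : every vertex of `C` has exactly `k` neighbours in `C'`,
i.e. `deg_{C'}(C) = k`. -/
def degOn (G : SimpleGraph V) (C C' : Set V) (k : ℕ) : Prop :=
  ∀ v ∈ C, Nat.card {x : V // x ∈ C' ∧ G.Adj v x} = k

/-- `C` is balanced with respect to `C'`: `deg_{C'}(C)` is defined. -/
def BalancedWrt (G : SimpleGraph V) (C C' : Set V) : Prop :=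
  ∃ k, degOn G C C' k

lemma crRel_refl (G : SimpleGraph V) : ∀ i (v : V), crRel G i v v
  | 0, _ => trivial
  | (i+1), v => ⟨crRel_refl G i v, fun _ => rfl⟩

lemma crRel_symm (G : SimpleGraph V) : ∀ i {u v : V}, crRel G i u v → crRel G i v u
  | 0, _, _, _ => trivial
  | (i+1), _, _, h => ⟨crRel_symm G i h.1, fun w => (h.2 w).symm⟩

lemma crRel_trans (G : SimpleGraph V) :
    ∀ i {u v w : V}, crRel G i u v → crRel G i v w → crRel G i u w
  | 0, _, _, _, _, _ => trivial
  | (i+1), _, _, _, h, h' => ⟨crRel_trans G i h.1 h'.1, fun w => (h.2 w).trans (h'.2 w)⟩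

def crSetoid (G : SimpleGraph V) (i : ℕ) : Setoid V :=
  ⟨crRel G i, crRel_refl G i, fun h => crRel_symm G _ h, fun h h' => crRel_trans G _ h h'⟩

lemma crRel_of_succ (G : SimpleGraph V) {i : ℕ} {u v : V} (h : crRel G (i+1) u v) :
    crRel G i u v := h.1

/-- The canonical surjection from level `i+1` classes to level `i` classes. -/
def crStep (G : SimpleGraph V) (i : ℕ) :
    Quotient (crSetoid G (i+1)) → Quotient (crSetoid G i) :=
  Quotient.map' id (fun _ _ h => h.1)

lemma crStep_mk (G : SimpleGraph V) (i : ℕ) (v : V) :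
    crStep G i (Quotient.mk'' v) = Quotient.mk'' v := rfl

lemma crStep_surj (G : SimpleGraph V) (i : ℕ) : Function.Surjective (crStep G i) := by
  intro q
  induction q using Quotient.ind
  exact ⟨Quotient.mk'' _, rfl⟩

lemma partition_eq_of_rel_iff (G : SimpleGraph V) {i : ℕ}
    (hr : ∀ u v : V, crRel G i u v ↔ crRel G (i+1) u v) :
    crPartition G (i+1) = crPartition G i := by
  have hc : crClass G (i+1) = crClass G i := by
    funext v
    exact Set.ext fun u => (hr u v).symm
  simp only [crPartition, hc]

lemma cardAux (G : SimpleGraph V) (u w : V) :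
    Nat.card {x : V // G.Adj u x ∧ crRel G 0 x w} = vdeg G u :=
  Nat.card_congr (Equiv.subtypeEquivRight fun _ => ⟨fun h => h.1, fun h => ⟨h, trivial⟩⟩)

lemma crRel_one_iff (G : SimpleGraph V) [Nonempty V] (u v : V) :
    crRel G 1 u v ↔ vdeg G u = vdeg G v := by
  constructor
  · intro h
    have := h.2 (Classical.arbitrary V)
    rwa [cardAux, cardAux] at this
  · intro h
    exact ⟨trivial, fun w => by rw [cardAux, cardAux]; exact h⟩

/-- Map a level-1 colour class to the common degree of its vertices. -/
noncomputable def degClass (G : SimpleGraph V) [Nonempty V] :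
    Quotient (crSetoid G 1) → (Set.range (vdeg G)) :=
  Quotient.lift (s := crSetoid G 1) (fun v => (⟨vdeg G v, v, rfl⟩ : Set.range (vdeg G)))
    (fun a b hab => Subtype.ext ((crRel_one_iff G a b).mp hab))

lemma degClass_bij (G : SimpleGraph V) [Nonempty V] :
    Function.Bijective (degClass G) := by
  constructor
  · intro a b hab
    induction a using Quotient.ind
    induction b using Quotient.ind
    exact Quotient.sound' ((crRel_one_iff G _ _).mpr (congrArg Subtype.val hab))
  · rintro ⟨_, v, rfl⟩
    exact ⟨Quotient.mk'' v, Subtype.ext rfl⟩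

/-- Every long-refinement graph on at least two vertices has exactly two distinct
vertex degrees. -/
theorem longRefinement_two_degrees [Fintype V] (G : SimpleGraph V)
    (h : IsLongRefinement G) (hn : 2 ≤ Fintype.card V) :
    (Set.range (vdeg G)).ncard = 2 := by
  classical
  set n := Fintype.card V with hnn
  have hV : Nonempty V := Fintype.card_pos_iff.mp (by omega)
  set N : ℕ → ℕ := fun i => Nat.card (Quotient (crSetoid G i)) with hN
  -- monotone
  have hmono : ∀ i, N i ≤ N (i+1) := fun i =>
    Nat.card_le_card_of_surjective _ (crStep_surj G i)
  -- strict steps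
  have hstrict : ∀ i < n - 1, N i < N (i+1) := by
    intro i hi
    rcases lt_or_eq_of_le (hmono i) with h' | h'
    · exact h'
    exfalso
    apply h.1 i hi
    apply partition_eq_of_rel_iff
    -- the step map is bijective
    have hb : Function.Bijective (crStep G i) :=
      (crStep_surj G i).bijective_of_nat_card_le (le_of_eq h'.symm)
    intro u v
    refine ⟨fun hr => ?_, fun hr => hr.1⟩
    have : crStep G i (Quotient.mk'' u) = crStep G i (Quotient.mk'' v) := by
      rw [crStep_mk, crStep_mk]
      exact Quotient.sound' hr
    exact Quotient.exact' (hb.1 this)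
  -- N 0 = 1
  have hN0 : N 0 = 1 := by
    have hs : Subsingleton (Quotient (crSetoid G 0)) := by
      constructor
      intro a b
      induction a using Quotient.ind
      induction b using Quotient.ind
      exact Quotient.sound' trivial
    exact Nat.card_eq_one_iff_unique.mpr ⟨hs, ⟨Quotient.mk'' (Classical.arbitrary V)⟩⟩
  -- upper bound
  have hub : ∀ i, N i ≤ n := by
    intro i
    have h1 := Nat.card_le_card_of_surjective (Quotient.mk'' : V → Quotient (crSetoid G i))
      (fun q => by induction q using Quotient.ind; exact ⟨_, rfl⟩)
    exact h1.trans (le_of_eq Nat.card_eq_fintype_card)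
  -- chain growth
  have key : ∀ d i, i + d ≤ n - 1 → N i + d ≤ N (i + d) := by
    intro d
    induction d with
    | zero => intro i _; simp
    | succ d ih =>
      intro i hle
      have h1 : N i + d ≤ N (i + d) := ih i (by omega)
      have h2 : N (i + d) < N (i + d + 1) := hstrict (i + d) (by omega)
      have h3 : N (i + (d + 1)) = N (i + d + 1) := rfl
      omega
  have h01 : N 0 + 1 ≤ N 1 := by
    have := key 1 0 (by omega)
    simpa using this
  have hlast : N 1 + (n - 2) ≤ N (1 + (n - 2)) := key (n - 2) 1 (by omega)
  have hN1 : N 1 = 2 := by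
    have := hub (1 + (n - 2))
    omega
  -- N 1 equals the number of distinct degrees
  have hfin : (Set.range (vdeg G)).ncard = N 1 := by
    rw [← Nat.card_coe_set_eq]
    exact (Nat.card_congr (Equiv.ofBijective _ (degClass_bij G))).symm
  rw [hfin, hN1]
end

section
/- A monochromatic path graph on n vertices takes exactly ⌊(n−1)/2⌋ iterations of Colour Refinement to stabilise. -/
variable {V : Type*}

namespace PathCR

open SimpleGraph

/-- reflection -/
def ref (n : ℕ) (x : Fin n) : Fin n := ⟨n - 1 - x.val, by omega⟩

/-- depth: distance to nearest end -/
def dep (n : ℕ) (x : Fin n) : ℕ := min x.val (n - 1 - x.val)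

lemma dep_ref (n : ℕ) (x : Fin n) : dep n (ref n x) = dep n x := by
  have := x.isLt; simp [dep, ref]; omega

lemma ref_ref (n : ℕ) (x : Fin n) : ref n (ref n x) = x := by
  have := x.isLt; ext; simp [ref]; omega

lemma adj_ref {n : ℕ} {u x : Fin n} (h : (pathGraph n).Adj u x) :
    (pathGraph n).Adj (ref n u) (ref n x) := by
  rw [pathGraph_adj] at h ⊢
  have := u.isLt; have := x.isLt
  simp only [ref]; omega

lemma dep_le (n : ℕ) (x : Fin n) : dep n x ≤ (n - 1) / 2 := by
  have := x.isLt; simp [dep]; omega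

lemma eq_or_ref {n : ℕ} {u v : Fin n} (h : dep n u = dep n v) :
    v = u ∨ v = ref n u := by
  have := u.isLt; have := v.isLt
  simp only [dep] at h
  rcases Nat.lt_or_ge (u.val + u.val) (n-1+1) with h1 | h1
  · rcases Nat.lt_or_ge (v.val + v.val) (n-1+1) with h2 | h2
    · left; ext; omega
    · right; ext; simp [ref]; omega
  · rcases Nat.lt_or_ge (v.val + v.val) (n-1+1) with h2 | h2
    · right; ext; simp [ref]; omega
    · left; ext; omega

/-- symmetry of neighbour counts under reflection -/
lemma card_ref {n : ℕ} (u : Fin n) (P : Fin n → Prop) (hP : ∀ x, P (ref n x) ↔ P x) :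
    Nat.card {x // (pathGraph n).Adj u x ∧ P x} =
    Nat.card {x // (pathGraph n).Adj (ref n u) x ∧ P x} := by
  apply Nat.card_congr
  refine ⟨fun ⟨x, hx⟩ => ⟨ref n x, adj_ref hx.1, (hP x).2 hx.2⟩,
          fun ⟨x, hx⟩ => ⟨ref n x, ?_, (hP x).2 hx.2⟩, ?_, ?_⟩
  · have := adj_ref hx.1; rwa [ref_ref] at this
  · intro ⟨x, hx⟩; simp [ref_ref]
  · intro ⟨x, hx⟩; simp [ref_ref]

lemma card_set (Q : Fin n → Prop) : Nat.card {x // Q x} = Set.ncard {x | Q x} :=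
  Nat.card_coe_set_eq _



/-- Lemma A: vertex of depth ≥ i+1 has both neighbours of truncated depth i -/
lemma countA {n : ℕ} (i c : ℕ) (u : Fin n) (hu : i + 1 ≤ dep n u) :
    Nat.card {x // (pathGraph n).Adj u x ∧ min (dep n x) i = c} =
      if c = i then 2 else 0 := by
  have hp := u.isLt
  have h1 : i + 1 ≤ u.val ∧ i + 1 ≤ n - 1 - u.val := by
    simp only [dep] at hu; omega
  set a : Fin n := ⟨u.val - 1, by omega⟩ with ha
  set b : Fin n := ⟨u.val + 1, by omega⟩ with hb
  rw [card_set]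
  by_cases hc : c = i
  · subst hc
    have hset : {x : Fin n | (pathGraph n).Adj u x ∧ min (dep n x) c = c} = {a, b} := by
      ext x
      rw [Set.mem_setOf_eq, pathGraph_adj, Set.mem_insert_iff, Set.mem_singleton_iff]
      constructor
      · rintro ⟨h | h, -⟩
        · right; ext; simp only [hb]; omega
        · left; ext; simp only [ha]; omega
      · rintro (rfl | rfl)
        · refine ⟨Or.inr (by simp only [ha]; omega), ?_⟩
          have : dep n a = min (u.val - 1) (n - 1 - (u.val - 1)) := by
            simp only [dep, ha]
          omega
        · refine ⟨Or.inl (by simp only [hb]), ?_⟩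
          have : dep n b = min (u.val + 1) (n - 1 - (u.val + 1)) := by
            simp only [dep, hb]
          omega
    rw [hset, if_pos rfl]
    exact Set.ncard_pair (by simp only [ha, hb, ne_eq, Fin.mk.injEq]; omega)
  · have hset : {x : Fin n | (pathGraph n).Adj u x ∧ min (dep n x) i = c} = ∅ := by
      ext x
      rw [Set.mem_setOf_eq, pathGraph_adj]
      simp only [Set.mem_empty_iff_false, iff_false, not_and]
      intro h
      have hx : dep n x = min x.val (n - 1 - x.val) := rfl
      omega
    rw [hset, if_neg hc, Set.ncard_empty]

/-- Lemma B: vertex of depth c (1 ≤ c ≤ i, c < m) has exactly one neighbour of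
truncated depth c-1. -/
lemma countB {n : ℕ} (i c : ℕ) (u : Fin n) (hc1 : 1 ≤ c) (hci : c ≤ i)
    (hcm : c < (n - 1) / 2) (hu : dep n u = c) :
    Nat.card {x // (pathGraph n).Adj u x ∧ min (dep n x) i = c - 1} = 1 := by
  have hP : ∀ x : Fin n, (min (dep n x) i = c - 1) ↔ (min (dep n x) i = c - 1) := fun _ => Iff.rfl
  -- reduce to the case u.val = c
  have key : ∀ u' : Fin n, u'.val = c →
      Nat.card {x // (pathGraph n).Adj u' x ∧ min (dep n x) i = c - 1} = 1 := by
    intro u' hval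
    have hp := u'.isLt
    have hn : 2 * c + 2 ≤ n - 1 := by omega
    set a : Fin n := ⟨c - 1, by omega⟩ with ha
    rw [card_set]
    have hset : {x : Fin n | (pathGraph n).Adj u' x ∧ min (dep n x) i = c - 1} = {a} := by
      ext x
      rw [Set.mem_setOf_eq, pathGraph_adj, Set.mem_singleton_iff]
      constructor
      · rintro ⟨h | h, h2⟩
        · -- x = c+1, depth c+1, truncated ≥ c > c-1: contradiction
          exfalso
          have hx : dep n x = c + 1 := by simp only [dep]; omega
          omega
        · ext; simp [ha]; omega
      · rintro rfl
        refine ⟨Or.inr (by simp [ha]; omega), ?_⟩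
        have : dep n a = c - 1 := by simp only [dep, ha]; omega
        omega
    rw [hset, Set.ncard_singleton]
  have hpos : u.val = c ∨ u.val = n - 1 - c := by
    have := u.isLt; simp only [dep] at hu; omega
  rcases hpos with h | h
  · exact key u h
  · rw [card_ref u _ (fun x => by rw [dep_ref])]
    apply key
    simp only [ref]; have := u.isLt; omega

/-- endpoint has exactly one neighbour (n ≥ 2), for an always-true predicate -/
lemma countE {n : ℕ} (u : Fin n) (P : Fin n → Prop) (hP : ∀ x, P x)
    (h0 : dep n u = 0) (hn : 2 ≤ n) :
    Nat.card {x // (pathGraph n).Adj u x ∧ P x} = 1 := by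
  have key : ∀ u' : Fin n, u'.val = 0 →
      Nat.card {x // (pathGraph n).Adj u' x ∧ P x} = 1 := by
    intro u' hval
    set a : Fin n := ⟨1, by omega⟩ with ha
    rw [card_set]
    have hset : {x : Fin n | (pathGraph n).Adj u' x ∧ P x} = {a} := by
      ext x
      rw [Set.mem_setOf_eq, pathGraph_adj, Set.mem_singleton_iff]
      constructor
      · rintro ⟨h | h, -⟩
        · ext; simp [ha]; omega
        · omega
      · rintro rfl
        exact ⟨Or.inl (by simp [ha]; omega), hP a⟩
    rw [hset, Set.ncard_singleton]
  have hpos : u.val = 0 ∨ u.val = n - 1 := by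
    have := u.isLt; simp only [dep] at h0; omega
  rcases hpos with h | h
  · exact key u h
  · rw [card_ref u _ (fun x => ⟨fun _ => hP x, fun _ => hP _⟩)]
    apply key; simp only [ref]; omega



/-- Main characterization: two vertices of the path get the same colour after `i`
rounds iff their depths truncated at `i` agree. -/
lemma crRel_iff {n : ℕ} (i : ℕ) (u v : Fin n) :
    crRel (pathGraph n) i u v ↔ min (dep n u) i = min (dep n v) i := by
  induction i generalizing u v with
  | zero => simp [crRel]
  | succ i ih =>
    have rw1 : ∀ (a w : Fin n),
        Nat.card {x // (pathGraph n).Adj a x ∧ crRel (pathGraph n) i x w} =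
        Nat.card {x // (pathGraph n).Adj a x ∧ min (dep n x) i = min (dep n w) i} :=
      fun a w => Nat.card_congr (Equiv.subtypeEquivRight fun x =>
        and_congr Iff.rfl (ih x w))
    constructor
    · rintro ⟨h0, hcnt⟩
      have hmin : min (dep n u) i = min (dep n v) i := (ih u v).1 h0
      by_contra hne
      -- one of u, v has depth exactly i, the other depth ≥ i+1
      have key : ∀ a b : Fin n, dep n a = i → i + 1 ≤ dep n b →
          (∀ w, Nat.card {x // (pathGraph n).Adj a x ∧ crRel (pathGraph n) i x w} =
            Nat.card {x // (pathGraph n).Adj b x ∧ crRel (pathGraph n) i x w}) → False := by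
        intro a b hda hdb hc
        have hc' : ∀ w, Nat.card {x // (pathGraph n).Adj a x ∧ min (dep n x) i = min (dep n w) i} =
            Nat.card {x // (pathGraph n).Adj b x ∧ min (dep n x) i = min (dep n w) i} := by
          intro w; rw [← rw1 a w, ← rw1 b w]; exact hc w
        have hble : dep n b ≤ (n - 1) / 2 := dep_le n b
        have hbp := b.isLt
        have hbn : 2 * i + 3 ≤ n := by
          have : dep n b = min b.val (n - 1 - b.val) := rfl
          omega
        rcases Nat.eq_zero_or_pos i with rfl | hi
        · -- i = 0 : endpoint vs interior
          have := hc' a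
          rw [countE a _ (fun x => by simp) hda (by omega),
            countA 0 _ b hdb] at this
          simp at this
        · -- i ≥ 1 : use a witness of depth i - 1
          set w : Fin n := ⟨i - 1, by omega⟩ with hwdef
          have hw : min (dep n w) i = i - 1 := by
            have : dep n w = min (i-1) (n - 1 - (i-1)) := rfl
            omega
          have := hc' w
          rw [hw, countB i i a hi le_rfl (by omega) hda, countA i (i-1) b hdb] at this
          simp only [if_neg (by omega : ¬ i - 1 = i)] at this
          exact absurd this one_ne_zero
      have hsplit : (dep n u = i ∧ i + 1 ≤ dep n v) ∨ (dep n v = i ∧ i + 1 ≤ dep n u) := by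
        omega
      rcases hsplit with ⟨h1, h2⟩ | ⟨h1, h2⟩
      · exact key u v h1 h2 hcnt
      · exact key v u h1 h2 (fun w => (hcnt w).symm)
    · intro h
      refine ⟨(ih u v).2 (by omega), fun w => ?_⟩
      rw [rw1 u w, rw1 v w]
      by_cases hd : i + 1 ≤ dep n u
      · have hdv : i + 1 ≤ dep n v := by omega
        rw [countA i _ u hd, countA i _ v hdv]
      · have hdd : dep n u = dep n v := by omega
        rcases eq_or_ref hdd with rfl | rfl
        · rfl
        · exact card_ref u _ (fun x => by rw [dep_ref])

end PathCR


/-- A monochromatic path on `n` vertices takes exactly `⌊(n-1)/2⌋` iterations of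
Colour Refinement to stabilise. -/
theorem pathGraph_stabilisation (n : ℕ) :
    crPartition (SimpleGraph.pathGraph n) ((n-1)/2 + 1) =
        crPartition (SimpleGraph.pathGraph n) ((n-1)/2) ∧
      ∀ j < (n-1)/2, crPartition (SimpleGraph.pathGraph n) (j+1) ≠
        crPartition (SimpleGraph.pathGraph n) j := by
  set m := (n-1)/2 with hm
  have hcl : ∀ (i : ℕ) (v : Fin n), crClass (SimpleGraph.pathGraph n) i v =
      {u | min (PathCR.dep n u) i = min (PathCR.dep n v) i} := by
    intro i v; ext u
    exact PathCR.crRel_iff i u v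
  constructor
  · have hstab : ∀ v : Fin n, crClass (SimpleGraph.pathGraph n) (m+1) v =
        crClass (SimpleGraph.pathGraph n) m v := by
      intro v; rw [hcl, hcl]; ext u
      simp only [Set.mem_setOf_eq]
      have h1 := PathCR.dep_le n u
      have h2 := PathCR.dep_le n v
      omega
    ext C
    constructor
    · rintro ⟨v, rfl⟩; exact ⟨v, hstab v⟩
    · rintro ⟨v, rfl⟩; exact ⟨v, (hstab v).symm⟩
  · intro j hj heq
    have hjm : j + 1 ≤ m := hj
    have hn3 : 2 * (j + 1) ≤ n - 1 := by omega
    have hn : j + 1 < n := by omega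
    set u : Fin n := ⟨j, by omega⟩ with hu0
    set v : Fin n := ⟨j+1, hn⟩ with hv0
    have hdu : PathCR.dep n u = j := by
      show min j (n - 1 - j) = j; omega
    have hdv : PathCR.dep n v = j + 1 := by
      show min (j+1) (n - 1 - (j+1)) = j + 1; omega
    have hmem : crClass (SimpleGraph.pathGraph n) (j+1) v ∈
        crPartition (SimpleGraph.pathGraph n) (j+1) := ⟨v, rfl⟩
    rw [heq] at hmem
    obtain ⟨w, hw⟩ := hmem
    have hv : v ∈ crClass (SimpleGraph.pathGraph n) (j+1) v := by
      rw [hcl]; exact rfl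
    rw [hw, hcl] at hv
    have hu : u ∈ crClass (SimpleGraph.pathGraph n) j w := by
      rw [hcl]
      simp only [Set.mem_setOf_eq] at hv ⊢
      omega
    rw [← hw, hcl] at hu
    simp only [Set.mem_setOf_eq] at hu
    omega
end
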